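/- Let G(m, b, d) be a D3 graph. Then: (1) G(m, b, d) is bipartite (2-colorable), with the vertices of even value and the vertices of odd value as the two color classes; (2) G(m, b, d) contains a Hamiltonian cycle, namely the cycle 0, 1, 2, …, 2m−1, 0; and (3) if the map sending j ∈ Fin b to the residue (2*j + 1 + d j) mod 2*b is injective, then G(m, b, d) is 3-regular (every vertex has degree 3). -/

import Mathlib

open SimpleGraph

/-- The chord/successor relation underlying the D3 graph: `y` follows `x` along the
Hamiltonian cycle, or `y` is reached from an odd-labelled `x` by the chord `d j`,
where `j` is the (unique) index with `x.val ≡ 2*j + 1 (mod 2*b)`. -/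
def d3Rel (m b : ℕ) (d : Fin b → ℕ) (x y : ZMod (2 * m)) : Prop :=
  y = x + 1 ∨
    (Odd x.val ∧ ∃ j : Fin b, x.val % (2 * b) = 2 * (j : ℕ) + 1 ∧ y = x + (d j : ZMod (2 * m)))

/-- The D3 graph `G(m, b, d)` of order `2*m` with symmetry factor `b` and
chord indices `d : Fin b → ℕ`: distinct vertices `x y : ZMod (2*m)` are adjacent iff
`y = x + 1`, or `y = x - 1`, or `x` is odd and `y = x + d j` for the unique `j` with
`x.val ≡ 2*j + 1 (mod 2*b)`, or `y` is odd and `x = y + d j` likewise. -/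
def D3Graph (m b : ℕ) (d : Fin b → ℕ) : SimpleGraph (ZMod (2 * m)) where
  Adj x y := x ≠ y ∧ (d3Rel m b d x y ∨ d3Rel m b d y x)
  symm := by
    constructor
    intro x y h
    exact ⟨h.1.symm, h.2.symm⟩
  loopless := by
    constructor
    intro x h
    exact h.1 rfl

section walkchain
variable {n : ℕ} {G : SimpleGraph (ZMod n)}

/-- Walk going up `k` steps along successors. -/
def chainWalk (h : ∀ x : ZMod n, G.Adj x (x + 1)) : (k : ℕ) → (a : ZMod n) → G.Walk a (a + k)
  | 0, a => Walk.nil.copy rfl (by simp)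
  | k + 1, a => ((chainWalk h k (a + 1)).cons (h a)).copy rfl (by push_cast; ring)

lemma chainWalk_support (h : ∀ x : ZMod n, G.Adj x (x + 1)) :
    ∀ (k : ℕ) (a : ZMod n), (chainWalk h k a).support
      = (List.range (k + 1)).map (fun i : ℕ => a + (i : ZMod n))
  | 0, a => by
    simp [chainWalk, List.range_succ]
  | k + 1, a => by
    have ih := chainWalk_support h k (a + 1)
    have hr : (List.range (k + 1 + 1)).map (fun i : ℕ => a + (i : ZMod n))
        = a :: (List.range (k + 1)).map (fun i : ℕ => (a + 1) + (i : ZMod n)) := by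
      rw [List.range_succ_eq_map, List.map_cons, List.map_map]
      congr 1
      · simp
      · refine List.map_congr_left fun i _ => ?_
        simp only [Function.comp_apply, Nat.succ_eq_add_one]
        push_cast; ring
    rw [hr, ← ih]
    simp only [chainWalk, Walk.support_copy, Walk.support_cons]

lemma chainWalk_edges (h : ∀ x : ZMod n, G.Adj x (x + 1)) :
    ∀ (k : ℕ) (a : ZMod n), (chainWalk h k a).edges
      = (List.range k).map (fun i : ℕ => s(a + (i : ZMod n), a + (i : ZMod n) + 1))
  | 0, a => by
    simp [chainWalk]
  | k + 1, a => by
    have ih := chainWalk_edges h k (a + 1)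
    have hr : (List.range (k + 1)).map (fun i : ℕ => s(a + (i : ZMod n), a + (i : ZMod n) + 1))
        = s(a, a + 1) :: (List.range k).map
            (fun i : ℕ => s((a + 1) + (i : ZMod n), (a + 1) + (i : ZMod n) + 1)) := by
      rw [List.range_succ_eq_map, List.map_cons, List.map_map]
      congr 1
      · simp
      · refine List.map_congr_left fun i _ => ?_
        simp only [Function.comp_apply, Nat.succ_eq_add_one]
        push_cast
        congr 1 <;> ring
    rw [hr, ← ih]
    simp only [chainWalk, Walk.edges_copy, Walk.edges_cons]

end walkchain

section zmodlemmas
variable {m : ℕ}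

lemma val_add_nat (hm : 2 ≤ m) (x : ZMod (2 * m)) (k : ℕ) :
    (x + (k : ZMod (2 * m))).val % 2 = (x.val + k) % 2 := by
  haveI : NeZero (2 * m) := ⟨by omega⟩
  rw [ZMod.val_add, ZMod.val_natCast]
  have h2 : (2 : ℕ) ∣ 2 * m := ⟨m, rfl⟩
  rw [Nat.mod_mod_of_dvd _ h2, Nat.add_mod, Nat.mod_mod_of_dvd _ h2, ← Nat.add_mod]

lemma natCast_ne_zero_of (hm : 2 ≤ m) {k : ℕ} (h0 : 0 < k) (h1 : k < 2 * m) :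
    (k : ZMod (2 * m)) ≠ 0 := by
  haveI : NeZero (2 * m) := ⟨by omega⟩
  intro h
  have := congrArg ZMod.val h
  rw [ZMod.val_natCast, ZMod.val_zero, Nat.mod_eq_of_lt h1] at this
  omega

lemma natCast_inj_window (hm : 2 ≤ m) {i j : ℕ} (hi : i < 2 * m) (hj : j < 2 * m)
    (h : (i : ZMod (2 * m)) = (j : ZMod (2 * m))) : i = j := by
  haveI : NeZero (2 * m) := ⟨by omega⟩
  have := congrArg ZMod.val h
  rwa [ZMod.val_natCast, ZMod.val_natCast, Nat.mod_eq_of_lt hi, Nat.mod_eq_of_lt hj] at this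

end zmodlemmas

section d3

variable {m b : ℕ} {d : Fin b → ℕ}

/-- Adjacent vertices have different parity of values. -/
lemma d3_adj_parity (hm : 2 ≤ m) (hodd : ∀ j, Odd (d j)) {x y : ZMod (2 * m)}
    (h : (D3Graph m b d).Adj x y) : x.val % 2 ≠ y.val % 2 := by
  have key : ∀ u v : ZMod (2 * m), d3Rel m b d u v → u.val % 2 ≠ v.val % 2 := by
    rintro u v (rfl | ⟨-, j, -, rfl⟩)
    · rw [show (u + 1 : ZMod (2 * m)) = u + ((1 : ℕ) : ZMod (2 * m)) by push_cast; ring,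
        val_add_nat hm]
      omega
    · rw [val_add_nat hm]
      have := (hodd j)
      rw [Nat.odd_iff] at this
      omega
  rcases h.2 with h' | h'
  · exact key x y h'
  · exact fun e => key y x h' e.symm

lemma d3_adj_succ (hm : 2 ≤ m) (x : ZMod (2 * m)) : (D3Graph m b d).Adj x (x + 1) := by
  refine ⟨fun h => ?_, Or.inl (Or.inl rfl)⟩
  have : (1 : ZMod (2 * m)) = 0 := by
    have := congrArg (· - x) h
    simpa using this.symm
  exact natCast_ne_zero_of hm (k := 1) one_pos (by omega) (by simpa using this)

end d3

theorem stmt_3 (m b : ℕ) (hm : 2 ≤ m) (hb : 1 ≤ b) (hbm : b ∣ m)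
    (d : Fin b → ℕ) (hodd : ∀ j, Odd (d j)) (h3 : ∀ j, 3 ≤ d j)
    (hle : ∀ j, d j ≤ 2 * m - 3) :
    ((D3Graph m b d).Colorable 2 ∧
      ∀ x y, (D3Graph m b d).Adj x y → (Even x.val ↔ Odd y.val)) ∧
    (∃ c : (D3Graph m b d).Walk 0 0, c.IsHamiltonianCycle ∧
      c.support = 0 :: (List.range (2 * m)).map (fun i => ((i + 1 : ℕ) : ZMod (2 * m)))) ∧
    ((Function.Injective fun j : Fin b => (2 * (j : ℕ) + 1 + d j) % (2 * b)) →
      ∀ v, {w | (D3Graph m b d).Adj v w}.ncard = 3) := by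
  haveI : NeZero (2 * m) := ⟨by omega⟩
  have parity : ∀ x y : ZMod (2 * m), (D3Graph m b d).Adj x y → (Even x.val ↔ Odd y.val) := by
    intro x y h
    have := d3_adj_parity hm hodd h
    rw [Nat.even_iff, Nat.odd_iff]
    omega
  refine ⟨⟨?_, parity⟩, ?_, ?_⟩
  · -- 2-colorability
    refine ⟨SimpleGraph.Coloring.mk (fun v => (⟨v.val % 2, by omega⟩ : Fin 2)) ?_⟩
    intro x y h
    have := d3_adj_parity hm hodd h
    simp only [ne_eq, Fin.mk.injEq, top_adj]
    exact this
  · -- Hamiltonian cycle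
    have hadj : ∀ x : ZMod (2 * m), (D3Graph m b d).Adj x (x + 1) := d3_adj_succ hm
    have hcast : ((0 : ZMod (2 * m)) + ((2 * m : ℕ) : ZMod (2 * m))) = 0 := by simp
    set c : (D3Graph m b d).Walk 0 0 := (chainWalk hadj (2 * m) 0).copy rfl hcast with hc
    have hsup : c.support = 0 :: (List.range (2 * m)).map
        (fun i => ((i + 1 : ℕ) : ZMod (2 * m))) := by
      rw [hc, SimpleGraph.Walk.support_copy, chainWalk_support, List.range_succ_eq_map,
        List.map_cons, List.map_map]
      congr 1
      · simp
      · refine List.map_congr_left fun i _ => ?_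
        simp only [Function.comp_apply, Nat.succ_eq_add_one]
        push_cast
        ring
    have htail_nodup : (c.support.tail).Nodup := by
      rw [hsup]
      simp only [List.tail_cons]
      refine (List.nodup_range).map_on ?_
      intro i hi j hj hij
      rw [List.mem_range] at hi hj
      have h' : (i : ZMod (2 * m)) = (j : ZMod (2 * m)) := by
        push_cast at hij
        exact add_right_cancel hij
      exact natCast_inj_window hm hi hj h'
    have hedges : c.edges = (List.range (2 * m)).map
        (fun i : ℕ => s((i : ZMod (2 * m)), (i : ZMod (2 * m)) + 1)) := by
      rw [hc, SimpleGraph.Walk.edges_copy, chainWalk_edges]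
      simp only [zero_add]
    have h2ne : ((2 : ℕ) : ZMod (2 * m)) ≠ 0 := natCast_ne_zero_of hm (by omega) (by omega)
    have hedges_nodup : c.edges.Nodup := by
      rw [hedges]
      refine (List.nodup_range).map_on ?_
      intro i hi j hj hij
      rw [List.mem_range] at hi hj
      rw [Sym2.eq_iff] at hij
      rcases hij with ⟨h1, -⟩ | ⟨h1, h2⟩
      · exact natCast_inj_window hm hi hj h1
      · exfalso
        apply h2ne
        have : (i : ZMod (2 * m)) + 0 = (i : ZMod (2 * m)) + ((2 : ℕ) : ZMod (2 * m)) := by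
          rw [add_zero]
          nth_rewrite 1 [h1]
          rw [← h2]
          push_cast
          ring
        exact (add_left_cancel this).symm
    have hne_nil : c ≠ SimpleGraph.Walk.nil := by
      intro h
      have := congrArg SimpleGraph.Walk.support h
      rw [hsup, SimpleGraph.Walk.support_nil] at this
      have hlen := congrArg List.length this
      simp at hlen
      omega
    have hcyc : c.IsCycle := ⟨⟨⟨hedges_nodup⟩, hne_nil⟩, htail_nodup⟩
    refine ⟨c, ?_, hsup⟩
    rw [SimpleGraph.Walk.isHamiltonianCycle_iff_isCycle_and_support_count_tail_eq_one]
    refine ⟨hcyc, fun a => ?_⟩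
    rw [hsup]
    simp only [List.tail_cons]
    refine List.count_eq_one_of_mem (by
      have := htail_nodup
      rwa [hsup, List.tail_cons] at this) ?_
    rw [List.mem_map]
    refine ⟨(a - 1).val, ?_, ?_⟩
    · rw [List.mem_range]; exact ZMod.val_lt _
    · push_cast
      rw [ZMod.natCast_val, ZMod.cast_id]
      ring
  · -- 3-regularity
    intro hinj v
    have hbpos : 0 < 2 * b := by omega
    have hblt : 2 * b ≤ 2 * m := by
      have := Nat.le_of_dvd (by omega) hbm
      omega
    have hbm2 : (2 * b : ℕ) ∣ 2 * m := mul_dvd_mul_left 2 hbm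
    have hdlt : ∀ j, d j < 2 * m := fun j => by have := hle j; omega
    have hdval : ∀ j, ((d j : ZMod (2 * m))).val = d j := fun j => by
      rw [ZMod.val_natCast, Nat.mod_eq_of_lt (hdlt j)]
    -- key modular computation: if v = w + d j then v.val ≡ w.val + d j mod 2b
    have hkey : ∀ (w : ZMod (2 * m)) (j : Fin b), v = w + (d j : ZMod (2 * m)) →
        v.val % (2 * b) = (w.val + d j) % (2 * b) := by
      intro w j hv
      have : v.val = (w.val + d j) % (2 * m) := by
        rw [hv, ZMod.val_add, hdval]
      rw [this, Nat.mod_mod_of_dvd _ hbm2]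
    -- congruence condition ↔ chord-index equation
    have hcond : ∀ (w : ZMod (2 * m)) (j : Fin b), v = w + (d j : ZMod (2 * m)) →
        (w.val % (2 * b) = 2 * (j : ℕ) + 1 ↔
          (2 * (j : ℕ) + 1 + d j) % (2 * b) = v.val % (2 * b)) := by
      intro w j hv
      have hk := hkey w j hv
      have hjlt : 2 * (j : ℕ) + 1 < 2 * b := by have := j.isLt; omega
      constructor
      · intro hw
        have h1 : w.val ≡ 2 * (j : ℕ) + 1 [MOD 2 * b] := by
          unfold Nat.ModEq
          rw [hw, Nat.mod_eq_of_lt hjlt]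
        have h2 := h1.add_right (d j)
        rw [hk]
        exact h2.symm
      · intro hf
        have h2 : w.val + d j ≡ 2 * (j : ℕ) + 1 + d j [MOD 2 * b] := by
          unfold Nat.ModEq
          rw [← hk, hf]
        have h1 := h2.add_right_cancel' (d j)
        unfold Nat.ModEq at h1
        rwa [Nat.mod_eq_of_lt hjlt] at h1
    -- nonzero casts tooling
    have hsubcast : ∀ k : ℕ, k ≤ 2 * m → v + ((2 * m - k : ℕ) : ZMod (2 * m))
        = v - (k : ZMod (2 * m)) := by
      intro k hk
      have h0 : ((2 * m - k : ℕ) : ZMod (2 * m)) + (k : ZMod (2 * m))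
          = ((2 * m : ℕ) : ZMod (2 * m)) := by
        rw [← Nat.cast_add]
        congr 1
        omega
      rw [ZMod.natCast_self] at h0
      rw [eq_neg_of_add_eq_zero_left h0]
      ring
    have hnedist : ∀ k k' : ℕ, k < 2 * m → k' < 2 * m → k ≠ k' →
        v + (k : ZMod (2 * m)) ≠ v + (k' : ZMod (2 * m)) := by
      intro k k' hk hk' hne h
      exact hne (natCast_inj_window hm hk hk' (add_left_cancel h))
    have hone : (v + 1 : ZMod (2 * m)) = v + ((1 : ℕ) : ZMod (2 * m)) := by push_cast; ring
    have hm1cast : ((2 * m - 1 : ℕ) : ZMod (2 * m)) = -1 := by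
      have h0 : ((2 * m - 1 : ℕ) : ZMod (2 * m)) + ((1 : ℕ) : ZMod (2 * m))
          = ((2 * m : ℕ) : ZMod (2 * m)) := by
        rw [← Nat.cast_add]
        congr 1
        omega
      rw [ZMod.natCast_self] at h0
      have := eq_neg_of_add_eq_zero_left h0
      rw [this]
      push_cast
      ring
    have hmone : (v - 1 : ZMod (2 * m)) = v + ((2 * m - 1 : ℕ) : ZMod (2 * m)) := by
      rw [hm1cast]
      ring
    have adjsucc : (D3Graph m b d).Adj v (v + 1) := d3_adj_succ hm v
    have adjpred : (D3Graph m b d).Adj v (v - 1) := by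
      have h := d3_adj_succ (b := b) (d := d) hm (v - 1)
      rw [sub_add_cancel] at h
      exact h.symm
    have hAdj : ∀ w, (D3Graph m b d).Adj v w ↔
        (v ≠ w ∧ (d3Rel m b d v w ∨ d3Rel m b d w v)) := fun w => Iff.rfl
    by_cases hv : Odd v.val
    · -- v odd: chord neighbour v + d j0
      obtain ⟨j0, hj0⟩ : ∃ j0 : Fin b, v.val % (2 * b) = 2 * (j0 : ℕ) + 1 := by
        have h2 : (2 : ℕ) ∣ 2 * b := ⟨b, rfl⟩
        have hp : v.val % (2 * b) % 2 = 1 := by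
          rw [Nat.mod_mod_of_dvd _ h2]
          rw [Nat.odd_iff] at hv
          exact hv
        have hlt : v.val % (2 * b) < 2 * b := Nat.mod_lt _ hbpos
        refine ⟨⟨(v.val % (2 * b) - 1) / 2, by omega⟩, ?_⟩
        simp only
        omega
      have hset : {w | (D3Graph m b d).Adj v w} =
          {v + ((1 : ℕ) : ZMod (2 * m)), v + ((2 * m - 1 : ℕ) : ZMod (2 * m)),
            v + ((d j0 : ℕ) : ZMod (2 * m))} := by
        ext w
        simp only [Set.mem_setOf_eq, Set.mem_insert_iff, Set.mem_singleton_iff]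
        constructor
        · intro h
          have hp := d3_adj_parity hm hodd h
          rcases h.2 with (rfl | ⟨-, j, hj, rfl⟩) | (h' | ⟨hwodd, j, hj, hvw⟩)
          · left; exact hone
          · right; right
            have : j = j0 := by
              apply Fin.ext
              omega
            rw [this]
          · right; left
            rw [h', hm1cast]
            ring
          · exfalso
            have hww : w.val % 2 = 1 := by rwa [← Nat.odd_iff]
            have : v.val % 2 = (w.val + d j) % 2 := by
              rw [hvw, val_add_nat hm]
            have hdj := hodd j
            rw [Nat.odd_iff] at hv hdj
            omega
        · intro h
          rcases h with rfl | rfl | rfl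
          · rw [← hone]; exact adjsucc
          · have he : v + ((2 * m - 1 : ℕ) : ZMod (2 * m)) = v - 1 := by
              rw [hm1cast]; ring
            rw [he]
            exact adjpred
          · refine ⟨?_, Or.inl (Or.inr ⟨hv, j0, hj0, rfl⟩)⟩
            intro hcontra
            have : ((d j0 : ℕ) : ZMod (2 * m)) = ((0 : ℕ) : ZMod (2 * m)) := by
              have := congrArg (fun z => z - v) hcontra
              push_cast
              simpa [sub_self] using this.symm
            have := natCast_inj_window hm (hdlt j0) (by omega) this
            have := h3 j0
            omega
      rw [hset]
      rw [Set.ncard_eq_three]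
      have hd0 := h3 j0
      have hd1 := hle j0
      exact ⟨_, _, _, hnedist 1 (2*m-1) (by omega) (by omega) (by omega),
        hnedist 1 (d j0) (by omega) (hdlt j0) (by omega),
        hnedist (2*m-1) (d j0) (by omega) (hdlt j0) (by omega), rfl⟩
    · -- v even: chord neighbour v - d j1
      have hvev : v.val % 2 = 0 := by
        rw [Nat.odd_iff] at hv
        omega
      -- surjectivity of j ↦ (2j+1+d j) % 2b onto even residues
      obtain ⟨j1, hj1⟩ : ∃ j1 : Fin b, (2 * (j1 : ℕ) + 1 + d j1) % (2 * b)
          = v.val % (2 * b) := by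
        have h2 : (2 : ℕ) ∣ 2 * b := ⟨b, rfl⟩
        have hev : ∀ j : Fin b, (2 * (j : ℕ) + 1 + d j) % (2 * b) % 2 = 0 := by
          intro j
          rw [Nat.mod_mod_of_dvd _ h2]
          have := hodd j
          rw [Nat.odd_iff] at this
          omega
        have hrlt : v.val % (2 * b) < 2 * b := Nat.mod_lt _ hbpos
        have hrev : v.val % (2 * b) % 2 = 0 := by
          rw [Nat.mod_mod_of_dvd _ h2]
          exact hvev
        set f : Fin b → Fin b := fun j =>
          ⟨(2 * (j : ℕ) + 1 + d j) % (2 * b) / 2, by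
            have := Nat.mod_lt (2 * (j : ℕ) + 1 + d j) hbpos
            omega⟩ with hf
        have hfinj : Function.Injective f := by
          intro i j hij
          apply hinj
          have h1 := hev i
          have h2' := hev j
          have := congrArg Fin.val hij
          simp only [hf] at this
          simp only
          omega
        obtain ⟨j, hj⟩ := Finite.injective_iff_surjective.mp hfinj
          ⟨v.val % (2 * b) / 2, by omega⟩
        refine ⟨j, ?_⟩
        have := congrArg Fin.val hj
        simp only [hf] at this
        have := hev j
        omega
      have hdle1 := hle j1
      set w1 : ZMod (2 * m) := v - ((d j1 : ℕ) : ZMod (2 * m)) with hw1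
      have hvw1 : v = w1 + ((d j1 : ℕ) : ZMod (2 * m)) := by rw [hw1]; ring
      have hw1cong : w1.val % (2 * b) = 2 * (j1 : ℕ) + 1 :=
        (hcond w1 j1 hvw1).mpr hj1
      have hw1odd : Odd w1.val := by
        have : v.val % 2 = (w1.val + d j1) % 2 := by
          rw [hvw1, val_add_nat hm]
        have hdj := hodd j1
        rw [Nat.odd_iff] at hdj
        rw [Nat.odd_iff]
        omega
      have hset : {w | (D3Graph m b d).Adj v w} =
          {v + ((1 : ℕ) : ZMod (2 * m)), v + ((2 * m - 1 : ℕ) : ZMod (2 * m)),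
            v + ((2 * m - d j1 : ℕ) : ZMod (2 * m))} := by
        have hw1eq : w1 = v + ((2 * m - d j1 : ℕ) : ZMod (2 * m)) := by
          rw [hsubcast (d j1) (by have := hle j1; omega), hw1]
        ext w
        simp only [Set.mem_setOf_eq, Set.mem_insert_iff, Set.mem_singleton_iff]
        constructor
        · intro h
          rcases h.2 with (rfl | ⟨hvodd, -⟩) | (h' | ⟨hwodd, j, hj, hvw⟩)
          · left; exact hone
          · exact absurd hvodd hv
          · right; left
            rw [h', hm1cast]
            ring
          · right; right
            have hweq : w = v - ((d j : ℕ) : ZMod (2 * m)) := by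
              rw [hvw]; ring
            have hfj : (2 * (j : ℕ) + 1 + d j) % (2 * b) = v.val % (2 * b) :=
              (hcond w j (by rw [hvw])).mp hj
            have : j = j1 := hinj (hfj.trans hj1.symm)
            rw [← hw1eq, hw1, ← this, hweq]
        · intro h
          rcases h with rfl | rfl | rfl
          · rw [← hone]; exact adjsucc
          · have he : v + ((2 * m - 1 : ℕ) : ZMod (2 * m)) = v - 1 := by
              rw [hm1cast]; ring
            rw [he]
            exact adjpred
          · rw [← hw1eq]
            refine ⟨?_, Or.inr (Or.inr ⟨hw1odd, j1, hw1cong, hvw1⟩)⟩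
            intro hcontra
            rw [hw1] at hcontra
            have h2 : ((d j1 : ℕ) : ZMod (2 * m)) = ((0 : ℕ) : ZMod (2 * m)) := by
              push_cast
              linear_combination hcontra
            have := natCast_inj_window hm (hdlt j1) (by omega) h2
            have := h3 j1
            omega
      rw [hset, Set.ncard_eq_three]
      have hd0 := h3 j1
      have hd1 := hle j1
      exact ⟨_, _, _, hnedist 1 (2*m-1) (by omega) (by omega) (by omega),
        hnedist 1 (2*m - d j1) (by omega) (by omega) (by omega),
        hnedist (2*m-1) (2*m - d j1) (by omega) (by omega) (by omega), rfl⟩
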